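/- Under the conditions of the contraction lemma (existence of ρ with ‖Q₀‖_u + ρ²(b−a)M₁M₂‖B‖_u ≤ ρ and 2ρ(b−a)M₁M₂‖B‖_u < 1), the equation P(t) = Q₀(t) − ∫_t^b Q^{(2)}_{r,t}P(r)B(r)P(r)Q^{(1)}_{r,t}dr has a unique solution P in C_u([a,b]; L(X₁,X₂)) with ‖P‖_u ≤ ρ. -/

import Mathlib

open MeasureTheory intervalIntegral


open MeasureTheory intervalIntegral

/-- Strong continuity + uniform bound + continuous vector path gives continuity of
`s ↦ A s (v s)`. -/
lemma strong_apply_continuousOn {Y Z : Type*}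
    [NormedAddCommGroup Y] [NormedSpace ℝ Y] [NormedAddCommGroup Z] [NormedSpace ℝ Z]
    (A : ℝ → Y →L[ℝ] Z) (v : ℝ → Y) (S : Set ℝ) (M : ℝ)
    (hM : ∀ s ∈ S, ‖A s‖ ≤ M) (hA : ∀ y : Y, ContinuousOn (fun s => A s y) S)
    (hv : ContinuousOn v S) : ContinuousOn (fun s => A s (v s)) S := by
  intro s₀ hs₀
  have h1 : Filter.Tendsto (fun s => A s (v s - v s₀)) (nhdsWithin s₀ S) (nhds 0) := by
    apply squeeze_zero_norm' (a := fun s => M * ‖v s - v s₀‖)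
    · filter_upwards [self_mem_nhdsWithin] with s hs
      calc ‖A s (v s - v s₀)‖ ≤ ‖A s‖ * ‖v s - v s₀‖ := (A s).le_opNorm _
        _ ≤ M * ‖v s - v s₀‖ := by
            have := (A s).opNorm_nonneg
            exact mul_le_mul_of_nonneg_right (hM s hs) (norm_nonneg _)
    · have h : Filter.Tendsto (fun s => v s - v s₀) (nhdsWithin s₀ S) (nhds 0) := by
        have h := (hv s₀ hs₀).sub (tendsto_const_nhds (x := v s₀))
        exact (show Filter.Tendsto (v - fun _ => v s₀) (nhdsWithin s₀ S) (nhds 0) by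
          simpa [ContinuousWithinAt] using h)
      simpa using h.norm.const_mul M
  have h2 : Filter.Tendsto (fun s => A s (v s₀)) (nhdsWithin s₀ S) (nhds (A s₀ (v s₀))) :=
    hA (v s₀) s₀ hs₀
  have h3 := h1.add h2
  simp only [zero_add] at h3
  have : ContinuousWithinAt (fun s => A s (v s - v s₀) + A s (v s₀)) S s₀ := by
    simpa [ContinuousWithinAt] using h3
  exact this.congr (fun s _ => by simp [map_sub]) (by simp [map_sub])

structure RicSetup (X₁ X₂ : Type*)
    [NormedAddCommGroup X₁] [NormedSpace ℝ X₁]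
    [NormedAddCommGroup X₂] [NormedSpace ℝ X₂] where
  a : ℝ
  b : ℝ
  hab : a ≤ b
  Q1 : ℝ → ℝ → X₁ →L[ℝ] X₁
  Q2 : ℝ → ℝ → X₂ →L[ℝ] X₂
  M₁ : ℝ
  M₂ : ℝ
  hQ1bdd : ∀ t s : ℝ, a ≤ t → t ≤ s → s ≤ b → ‖Q1 s t‖ ≤ M₁
  hQ2bdd : ∀ t s : ℝ, a ≤ t → t ≤ s → s ≤ b → ‖Q2 s t‖ ≤ M₂
  hQ1sc₁ : ∀ x : X₁, ∀ t ∈ Set.Icc a b, ContinuousOn (fun s => Q1 s t x) (Set.Icc t b)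
  hQ1sc₂ : ∀ x : X₁, ∀ s ∈ Set.Icc a b, ContinuousOn (fun t => Q1 s t x) (Set.Icc a s)
  hQ2sc₁ : ∀ y : X₂, ∀ t ∈ Set.Icc a b, ContinuousOn (fun s => Q2 s t y) (Set.Icc t b)
  hQ2sc₂ : ∀ y : X₂, ∀ s ∈ Set.Icc a b, ContinuousOn (fun t => Q2 s t y) (Set.Icc a s)
  B : ℝ → X₂ →L[ℝ] X₁
  hBsc : ∀ y : X₂, ContinuousOn (fun t => B t y) (Set.Icc a b)
  nB : ℝ
  hnB : ∀ t ∈ Set.Icc a b, ‖B t‖ ≤ nB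
  Q0 : ℝ → X₁ →L[ℝ] X₂
  hQ0sc : ∀ x : X₁, ContinuousOn (fun t => Q0 t x) (Set.Icc a b)
  nQ0 : ℝ
  hnQ0 : ∀ t ∈ Set.Icc a b, ‖Q0 t‖ ≤ nQ0
  ρ : ℝ
  hρ₁ : nQ0 + ρ ^ 2 * (b - a) * M₁ * M₂ * nB ≤ ρ
  hρ₂ : 2 * ρ * (b - a) * M₁ * M₂ * nB < 1

namespace RicSetup

variable {X₁ X₂ : Type*}
    [NormedAddCommGroup X₁] [NormedSpace ℝ X₁]
    [NormedAddCommGroup X₂] [NormedSpace ℝ X₂]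
    (S : RicSetup X₁ X₂)

lemma M1_nonneg : 0 ≤ S.M₁ := le_trans (norm_nonneg _) (S.hQ1bdd S.a S.a le_rfl le_rfl S.hab)
lemma M2_nonneg : 0 ≤ S.M₂ := le_trans (norm_nonneg _) (S.hQ2bdd S.a S.a le_rfl le_rfl S.hab)
lemma nB_nonneg : 0 ≤ S.nB := le_trans (norm_nonneg _) (S.hnB S.a ⟨le_rfl, S.hab⟩)
lemma nQ0_nonneg : 0 ≤ S.nQ0 := le_trans (norm_nonneg _) (S.hnQ0 S.a ⟨le_rfl, S.hab⟩)
lemma rho_nonneg : 0 ≤ S.ρ := by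
  have h1 := S.hρ₁
  have h2 := S.nQ0_nonneg
  nlinarith [sq_nonneg S.ρ, S.M1_nonneg, S.M2_nonneg, S.nB_nonneg, sub_nonneg.mpr S.hab,
    mul_nonneg (mul_nonneg (mul_nonneg (mul_nonneg (sq_nonneg S.ρ) (sub_nonneg.mpr S.hab)) S.M1_nonneg) S.M2_nonneg) S.nB_nonneg]

/-- The contraction constant. -/
noncomputable def k : ℝ := 2 * S.ρ * (S.b - S.a) * S.M₁ * S.M₂ * S.nB

lemma k_nonneg : 0 ≤ S.k := by
  unfold k
  have := S.rho_nonneg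
  have := S.M1_nonneg
  have := S.M2_nonneg
  have := S.nB_nonneg
  have := sub_nonneg.mpr S.hab
  positivity

lemma k_lt_one : S.k < 1 := S.hρ₂

/-- `Good P` : strongly continuous on `[a,b]` with `‖P t‖ ≤ ρ` there. -/
def Good (P : ℝ → X₁ →L[ℝ] X₂) : Prop :=
  (∀ x : X₁, ContinuousOn (fun t => P t x) (Set.Icc S.a S.b)) ∧
  (∀ t ∈ Set.Icc S.a S.b, ‖P t‖ ≤ S.ρ)

/-- The integrand of the quadratic integral equation. -/
def Fi (P : ℝ → X₁ →L[ℝ] X₂) (t : ℝ) (x : X₁) (r : ℝ) : X₂ :=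
  S.Q2 r t (P r (S.B r (P r (S.Q1 r t x))))

/-- The integral term. -/
noncomputable def J (P : ℝ → X₁ →L[ℝ] X₂) (t : ℝ) (x : X₁) : X₂ :=
  ∫ r in t..S.b, S.Fi P t x r

lemma cont_r {P : ℝ → X₁ →L[ℝ] X₂} (hP : S.Good P) {t : ℝ} (ht : t ∈ Set.Icc S.a S.b)
    (x : X₁) : ContinuousOn (S.Fi P t x) (Set.Icc t S.b) := by
  have hsub : Set.Icc t S.b ⊆ Set.Icc S.a S.b := Set.Icc_subset_Icc ht.1 le_rfl
  have hQ1b : ∀ r ∈ Set.Icc t S.b, ‖S.Q1 r t‖ ≤ S.M₁ :=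
    fun r hr => S.hQ1bdd t r ht.1 hr.1 hr.2
  have hQ2b : ∀ r ∈ Set.Icc t S.b, ‖S.Q2 r t‖ ≤ S.M₂ :=
    fun r hr => S.hQ2bdd t r ht.1 hr.1 hr.2
  have hPb : ∀ r ∈ Set.Icc t S.b, ‖P r‖ ≤ S.ρ := fun r hr => hP.2 r (hsub hr)
  have hBb : ∀ r ∈ Set.Icc t S.b, ‖S.B r‖ ≤ S.nB := fun r hr => S.hnB r (hsub hr)
  have c1 : ContinuousOn (fun r => S.Q1 r t x) (Set.Icc t S.b) := S.hQ1sc₁ x t ht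
  have c2 : ContinuousOn (fun r => P r (S.Q1 r t x)) (Set.Icc t S.b) :=
    strong_apply_continuousOn P _ _ S.ρ hPb (fun y => (hP.1 y).mono hsub) c1
  have c3 : ContinuousOn (fun r => S.B r (P r (S.Q1 r t x))) (Set.Icc t S.b) :=
    strong_apply_continuousOn S.B _ _ S.nB hBb (fun y => (S.hBsc y).mono hsub) c2
  have c4 : ContinuousOn (fun r => P r (S.B r (P r (S.Q1 r t x)))) (Set.Icc t S.b) :=
    strong_apply_continuousOn P _ _ S.ρ hPb (fun y => (hP.1 y).mono hsub) c3
  exact strong_apply_continuousOn (fun r => S.Q2 r t) _ _ S.M₂ hQ2b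
    (fun y => S.hQ2sc₁ y t ht) c4

/-- pointwise constant for the norm bound of the integrand -/
noncomputable def c₀ : ℝ := S.M₂ * (S.ρ * (S.nB * (S.ρ * S.M₁)))

lemma c₀_nonneg : 0 ≤ S.c₀ := by
  unfold c₀
  have := S.rho_nonneg; have := S.M1_nonneg; have := S.M2_nonneg; have := S.nB_nonneg
  positivity

lemma bound_r {P : ℝ → X₁ →L[ℝ] X₂} (hP : S.Good P) {t : ℝ} (ht : t ∈ Set.Icc S.a S.b)
    (x : X₁) {r : ℝ} (hr : r ∈ Set.Icc t S.b) : ‖S.Fi P t x r‖ ≤ S.c₀ * ‖x‖ := by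
  have hra : r ∈ Set.Icc S.a S.b := ⟨le_trans ht.1 hr.1, hr.2⟩
  have hQ1b : ‖S.Q1 r t‖ ≤ S.M₁ := S.hQ1bdd t r ht.1 hr.1 hr.2
  have hQ2b : ‖S.Q2 r t‖ ≤ S.M₂ := S.hQ2bdd t r ht.1 hr.1 hr.2
  have hPb : ‖P r‖ ≤ S.ρ := hP.2 r hra
  have hBb : ‖S.B r‖ ≤ S.nB := S.hnB r hra
  have n1 : ‖S.Q1 r t x‖ ≤ S.M₁ * ‖x‖ := (S.Q1 r t).le_of_opNorm_le hQ1b x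
  have n2 : ‖P r (S.Q1 r t x)‖ ≤ S.ρ * (S.M₁ * ‖x‖) :=
    le_trans ((P r).le_of_opNorm_le hPb _) (by
      exact mul_le_mul_of_nonneg_left n1 S.rho_nonneg)
  have n3 : ‖S.B r (P r (S.Q1 r t x))‖ ≤ S.nB * (S.ρ * (S.M₁ * ‖x‖)) :=
    le_trans ((S.B r).le_of_opNorm_le hBb _) (mul_le_mul_of_nonneg_left n2 S.nB_nonneg)
  have n4 : ‖P r (S.B r (P r (S.Q1 r t x)))‖ ≤ S.ρ * (S.nB * (S.ρ * (S.M₁ * ‖x‖))) :=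
    le_trans ((P r).le_of_opNorm_le hPb _) (mul_le_mul_of_nonneg_left n3 S.rho_nonneg)
  have n5 : ‖S.Fi P t x r‖ ≤ S.M₂ * (S.ρ * (S.nB * (S.ρ * (S.M₁ * ‖x‖)))) :=
    le_trans ((S.Q2 r t).le_of_opNorm_le hQ2b _) (mul_le_mul_of_nonneg_left n4 S.M2_nonneg)
  calc ‖S.Fi P t x r‖ ≤ S.M₂ * (S.ρ * (S.nB * (S.ρ * (S.M₁ * ‖x‖)))) := n5
    _ = S.c₀ * ‖x‖ := by unfold c₀; ring

end RicSetup
namespace RicSetup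

set_option linter.unusedSectionVars false

variable {X₁ X₂ : Type*}
    [NormedAddCommGroup X₁] [NormedSpace ℝ X₁]
    [NormedAddCommGroup X₂] [NormedSpace ℝ X₂] [CompleteSpace X₂]
    (S : RicSetup X₁ X₂)

lemma integrable_Fi {P : ℝ → X₁ →L[ℝ] X₂} (hP : S.Good P) {t : ℝ}
    (ht : t ∈ Set.Icc S.a S.b) (x : X₁) :
    IntervalIntegrable (S.Fi P t x) MeasureTheory.volume t S.b := by
  apply ContinuousOn.intervalIntegrable
  have : Set.uIcc t S.b = Set.Icc t S.b := Set.uIcc_of_le ht.2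
  rw [this]
  exact S.cont_r hP ht x

lemma J_add {P : ℝ → X₁ →L[ℝ] X₂} (hP : S.Good P) {t : ℝ} (ht : t ∈ Set.Icc S.a S.b)
    (x y : X₁) : S.J P t (x + y) = S.J P t x + S.J P t y := by
  unfold J
  rw [← intervalIntegral.integral_add (S.integrable_Fi hP ht x) (S.integrable_Fi hP ht y)]
  apply intervalIntegral.integral_congr
  intro r _
  simp [Fi, map_add]

lemma J_smul {P : ℝ → X₁ →L[ℝ] X₂} (t : ℝ) (c : ℝ) (x : X₁) :
    S.J P t (c • x) = c • S.J P t x := by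
  unfold J
  rw [← intervalIntegral.integral_smul]
  apply intervalIntegral.integral_congr
  intro r _
  simp [Fi, _root_.map_smul]

lemma J_norm_le {P : ℝ → X₁ →L[ℝ] X₂} (hP : S.Good P) {t : ℝ} (ht : t ∈ Set.Icc S.a S.b)
    (x : X₁) : ‖S.J P t x‖ ≤ (S.b - S.a) * (S.c₀ * ‖x‖) := by
  have h1 : ‖S.J P t x‖ ≤ (S.c₀ * ‖x‖) * |S.b - t| := by
    apply intervalIntegral.norm_integral_le_of_norm_le_const
    intro r hr
    have : Set.uIoc t S.b = Set.Ioc t S.b := Set.uIoc_of_le ht.2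
    rw [this] at hr
    exact S.bound_r hP ht x ⟨le_of_lt hr.1, hr.2⟩
  have h2 : |S.b - t| ≤ S.b - S.a := by
    rw [abs_of_nonneg (sub_nonneg.mpr ht.2)]
    linarith [ht.1]
  calc ‖S.J P t x‖ ≤ (S.c₀ * ‖x‖) * |S.b - t| := h1
    _ ≤ (S.c₀ * ‖x‖) * (S.b - S.a) := by
        apply mul_le_mul_of_nonneg_left h2
        exact mul_nonneg S.c₀_nonneg (norm_nonneg _)
    _ = (S.b - S.a) * (S.c₀ * ‖x‖) := by ring

/-- the next iterate at a point `t ∈ [a,b]`, as a continuous linear map. -/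
noncomputable def TnextAt {P : ℝ → X₁ →L[ℝ] X₂} (hP : S.Good P) {t : ℝ}
    (ht : t ∈ Set.Icc S.a S.b) : X₁ →L[ℝ] X₂ :=
  LinearMap.mkContinuous
    { toFun := fun x => S.Q0 t x - S.J P t x
      map_add' := fun x y => by
        rw [_root_.map_add, S.J_add hP ht]; abel
      map_smul' := fun c x => by
        rw [_root_.map_smul, S.J_smul]; simp [smul_sub] }
    (S.nQ0 + (S.b - S.a) * S.c₀)
    (fun x => by
      simp only [LinearMap.coe_mk, AddHom.coe_mk]
      calc ‖S.Q0 t x - S.J P t x‖ ≤ ‖S.Q0 t x‖ + ‖S.J P t x‖ := norm_sub_le _ _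
        _ ≤ S.nQ0 * ‖x‖ + (S.b - S.a) * (S.c₀ * ‖x‖) :=
            add_le_add ((S.Q0 t).le_of_opNorm_le (S.hnQ0 t ht) x) (S.J_norm_le hP ht x)
        _ = (S.nQ0 + (S.b - S.a) * S.c₀) * ‖x‖ := by ring)

@[simp] lemma TnextAt_apply {P : ℝ → X₁ →L[ℝ] X₂} (hP : S.Good P) {t : ℝ}
    (ht : t ∈ Set.Icc S.a S.b) (x : X₁) :
    S.TnextAt hP ht x = S.Q0 t x - S.J P t x := rfl

/-- the next iterate, as a function on all of `ℝ` (junk value outside `[a,b]`). -/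
noncomputable def Tnext {P : ℝ → X₁ →L[ℝ] X₂} (hP : S.Good P) (t : ℝ) : X₁ →L[ℝ] X₂ :=
  if ht : t ∈ Set.Icc S.a S.b then S.TnextAt hP ht else 0

lemma Tnext_apply {P : ℝ → X₁ →L[ℝ] X₂} (hP : S.Good P) {t : ℝ}
    (ht : t ∈ Set.Icc S.a S.b) (x : X₁) :
    S.Tnext hP t x = S.Q0 t x - S.J P t x := by
  unfold Tnext; rw [dif_pos ht]; rfl

lemma Tnext_norm_le {P : ℝ → X₁ →L[ℝ] X₂} (hP : S.Good P) {t : ℝ}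
    (ht : t ∈ Set.Icc S.a S.b) : ‖S.Tnext hP t‖ ≤ S.ρ := by
  apply ContinuousLinearMap.opNorm_le_bound _ S.rho_nonneg
  intro x
  rw [S.Tnext_apply hP ht]
  have hle : S.nQ0 + (S.b - S.a) * S.c₀ ≤ S.ρ := by
    have := S.hρ₁
    have : S.nQ0 + S.ρ ^ 2 * (S.b - S.a) * S.M₁ * S.M₂ * S.nB = S.nQ0 + (S.b - S.a) * S.c₀ := by
      unfold c₀; ring
    linarith [S.hρ₁, this ▸ S.hρ₁]
  calc ‖S.Q0 t x - S.J P t x‖ ≤ ‖S.Q0 t x‖ + ‖S.J P t x‖ := norm_sub_le _ _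
    _ ≤ S.nQ0 * ‖x‖ + (S.b - S.a) * (S.c₀ * ‖x‖) :=
        add_le_add ((S.Q0 t).le_of_opNorm_le (S.hnQ0 t ht) x) (S.J_norm_le hP ht x)
    _ = (S.nQ0 + (S.b - S.a) * S.c₀) * ‖x‖ := by ring
    _ ≤ S.ρ * ‖x‖ := mul_le_mul_of_nonneg_right hle (norm_nonneg _)

end RicSetup
namespace RicSetup

variable {X₁ X₂ : Type*}
    [NormedAddCommGroup X₁] [NormedSpace ℝ X₁]
    [NormedAddCommGroup X₂] [NormedSpace ℝ X₂] [CompleteSpace X₂]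
    (S : RicSetup X₁ X₂)

lemma Fi_diff_bound {P P' : ℝ → X₁ →L[ℝ] X₂} (hP : S.Good P) (hP' : S.Good P')
    {δ : ℝ} (hδ : ∀ s ∈ Set.Icc S.a S.b, ‖P s - P' s‖ ≤ δ)
    {t : ℝ} (ht : t ∈ Set.Icc S.a S.b) (x : X₁) {r : ℝ} (hr : r ∈ Set.Icc t S.b) :
    ‖S.Fi P t x r - S.Fi P' t x r‖ ≤ S.M₂ * (2 * S.ρ * S.nB * S.M₁) * δ * ‖x‖ := by
  have hra : r ∈ Set.Icc S.a S.b := ⟨le_trans ht.1 hr.1, hr.2⟩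
  have hδ0 : 0 ≤ δ := le_trans (norm_nonneg _) (hδ r hra)
  have hQ1b : ‖S.Q1 r t‖ ≤ S.M₁ := S.hQ1bdd t r ht.1 hr.1 hr.2
  have hQ2b : ‖S.Q2 r t‖ ≤ S.M₂ := S.hQ2bdd t r ht.1 hr.1 hr.2
  have hPb : ‖P r‖ ≤ S.ρ := hP.2 r hra
  have hP'b : ‖P' r‖ ≤ S.ρ := hP'.2 r hra
  have hBb : ‖S.B r‖ ≤ S.nB := S.hnB r hra
  have hd : ‖P r - P' r‖ ≤ δ := hδ r hra
  set q := S.Q1 r t x with hq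
  have nq : ‖q‖ ≤ S.M₁ * ‖x‖ := (S.Q1 r t).le_of_opNorm_le hQ1b x
  -- inner difference
  have key : P r (S.B r (P r q)) - P' r (S.B r (P' r q))
      = (P r - P' r) (S.B r (P r q)) + P' r (S.B r ((P r - P' r) q)) := by
    simp only [ContinuousLinearMap.sub_apply, map_sub]
    abel
  have hx0 : (0:ℝ) ≤ ‖x‖ := norm_nonneg x
  have n1 : ‖(P r - P' r) (S.B r (P r q))‖ ≤ δ * (S.nB * (S.ρ * (S.M₁ * ‖x‖))) := by
    refine le_trans ((P r - P' r).le_of_opNorm_le hd _) ?_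
    apply mul_le_mul_of_nonneg_left _ hδ0
    refine le_trans ((S.B r).le_of_opNorm_le hBb _) ?_
    apply mul_le_mul_of_nonneg_left _ S.nB_nonneg
    refine le_trans ((P r).le_of_opNorm_le hPb _) ?_
    exact mul_le_mul_of_nonneg_left nq S.rho_nonneg
  have n2 : ‖P' r (S.B r ((P r - P' r) q))‖ ≤ S.ρ * (S.nB * (δ * (S.M₁ * ‖x‖))) := by
    refine le_trans ((P' r).le_of_opNorm_le hP'b _) ?_
    apply mul_le_mul_of_nonneg_left _ S.rho_nonneg
    refine le_trans ((S.B r).le_of_opNorm_le hBb _) ?_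
    apply mul_le_mul_of_nonneg_left _ S.nB_nonneg
    refine le_trans ((P r - P' r).le_of_opNorm_le hd _) ?_
    exact mul_le_mul_of_nonneg_left nq hδ0
  have inner : ‖P r (S.B r (P r q)) - P' r (S.B r (P' r q))‖
      ≤ 2 * S.ρ * S.nB * S.M₁ * δ * ‖x‖ := by
    rw [key]
    calc ‖(P r - P' r) (S.B r (P r q)) + P' r (S.B r ((P r - P' r) q))‖
        ≤ ‖(P r - P' r) (S.B r (P r q))‖ + ‖P' r (S.B r ((P r - P' r) q))‖ := norm_add_le _ _
      _ ≤ δ * (S.nB * (S.ρ * (S.M₁ * ‖x‖))) + S.ρ * (S.nB * (δ * (S.M₁ * ‖x‖))) :=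
          add_le_add n1 n2
      _ = 2 * S.ρ * S.nB * S.M₁ * δ * ‖x‖ := by ring
  have : S.Fi P t x r - S.Fi P' t x r
      = S.Q2 r t (P r (S.B r (P r q)) - P' r (S.B r (P' r q))) := by
    simp [Fi, map_sub, hq]
  rw [this]
  refine le_trans ((S.Q2 r t).le_of_opNorm_le hQ2b _) ?_
  calc S.M₂ * ‖P r (S.B r (P r q)) - P' r (S.B r (P' r q))‖
      ≤ S.M₂ * (2 * S.ρ * S.nB * S.M₁ * δ * ‖x‖) :=
        mul_le_mul_of_nonneg_left inner S.M2_nonneg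
    _ = S.M₂ * (2 * S.ρ * S.nB * S.M₁) * δ * ‖x‖ := by ring

lemma J_diff_bound {P P' : ℝ → X₁ →L[ℝ] X₂} (hP : S.Good P) (hP' : S.Good P')
    {δ : ℝ} (hδ : ∀ s ∈ Set.Icc S.a S.b, ‖P s - P' s‖ ≤ δ)
    {t : ℝ} (ht : t ∈ Set.Icc S.a S.b) (x : X₁) :
    ‖S.J P t x - S.J P' t x‖ ≤ S.k * δ * ‖x‖ := by
  have hδ0 : 0 ≤ δ := le_trans (norm_nonneg _) (hδ S.a ⟨le_rfl, S.hab⟩)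
  have hsub : S.J P t x - S.J P' t x = ∫ r in t..S.b, (S.Fi P t x r - S.Fi P' t x r) := by
    unfold J
    rw [intervalIntegral.integral_sub (S.integrable_Fi hP ht x) (S.integrable_Fi hP' ht x)]
  rw [hsub]
  have h1 : ‖∫ r in t..S.b, (S.Fi P t x r - S.Fi P' t x r)‖
      ≤ (S.M₂ * (2 * S.ρ * S.nB * S.M₁) * δ * ‖x‖) * |S.b - t| := by
    apply intervalIntegral.norm_integral_le_of_norm_le_const
    intro r hr
    rw [Set.uIoc_of_le ht.2] at hr
    exact S.Fi_diff_bound hP hP' hδ ht x ⟨le_of_lt hr.1, hr.2⟩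
  have h2 : |S.b - t| ≤ S.b - S.a := by
    rw [abs_of_nonneg (sub_nonneg.mpr ht.2)]; linarith [ht.1]
  have hc : 0 ≤ S.M₂ * (2 * S.ρ * S.nB * S.M₁) * δ * ‖x‖ := by
    have := S.rho_nonneg; have := S.M1_nonneg; have := S.M2_nonneg; have := S.nB_nonneg
    positivity
  calc ‖∫ r in t..S.b, (S.Fi P t x r - S.Fi P' t x r)‖
      ≤ (S.M₂ * (2 * S.ρ * S.nB * S.M₁) * δ * ‖x‖) * |S.b - t| := h1
    _ ≤ (S.M₂ * (2 * S.ρ * S.nB * S.M₁) * δ * ‖x‖) * (S.b - S.a) :=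
        mul_le_mul_of_nonneg_left h2 hc
    _ = S.k * δ * ‖x‖ := by unfold k; ring

lemma Tnext_contraction {P P' : ℝ → X₁ →L[ℝ] X₂} (hP : S.Good P) (hP' : S.Good P')
    {δ : ℝ} (hδ : ∀ s ∈ Set.Icc S.a S.b, ‖P s - P' s‖ ≤ δ)
    {t : ℝ} (ht : t ∈ Set.Icc S.a S.b) :
    ‖S.Tnext hP t - S.Tnext hP' t‖ ≤ S.k * δ := by
  have hδ0 : 0 ≤ δ := le_trans (norm_nonneg _) (hδ S.a ⟨le_rfl, S.hab⟩)
  apply ContinuousLinearMap.opNorm_le_bound _ (mul_nonneg S.k_nonneg hδ0)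
  intro x
  have : (S.Tnext hP t - S.Tnext hP' t) x = S.J P' t x - S.J P t x := by
    rw [ContinuousLinearMap.sub_apply, S.Tnext_apply hP ht, S.Tnext_apply hP' ht]
    abel
  rw [this, norm_sub_rev]
  exact S.J_diff_bound hP hP' hδ ht x

end RicSetup
namespace RicSetup

set_option linter.unusedSectionVars false

open Filter Topology

variable {X₁ X₂ : Type*}
    [NormedAddCommGroup X₁] [NormedSpace ℝ X₁]
    [NormedAddCommGroup X₂] [NormedSpace ℝ X₂] [CompleteSpace X₂]
    (S : RicSetup X₁ X₂)

/-- Strong continuity in `t` of the integrand for fixed `r`. -/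
lemma Fi_cont_t {P : ℝ → X₁ →L[ℝ] X₂} (hP : S.Good P) (x : X₁) {r : ℝ}
    (hr : r ∈ Set.Icc S.a S.b) :
    ContinuousOn (fun t => S.Fi P t x r) (Set.Icc S.a r) := by
  set W : X₁ →L[ℝ] X₂ := ((P r).comp (S.B r)).comp (P r) with hW
  have hv : ContinuousOn (fun t => W (S.Q1 r t x)) (Set.Icc S.a r) :=
    (W.continuous.comp_continuousOn (S.hQ1sc₂ x r hr))
  have hM : ∀ t ∈ Set.Icc S.a r, ‖S.Q2 r t‖ ≤ S.M₂ :=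
    fun t ht => S.hQ2bdd t r ht.1 ht.2 hr.2
  have := strong_apply_continuousOn (fun t => S.Q2 r t) (fun t => W (S.Q1 r t x))
    (Set.Icc S.a r) S.M₂ hM (fun y => S.hQ2sc₂ y r hr) hv
  exact this.congr (fun t _ => by simp [Fi, hW])

/-- Strong continuity in `t` of the integral term. -/
lemma J_cont {P : ℝ → X₁ →L[ℝ] X₂} (hP : S.Good P) (x : X₁) :
    ContinuousOn (fun t => S.J P t x) (Set.Icc S.a S.b) := by
  intro t₀ ht₀
  set G : ℝ → ℝ → X₂ := fun t r => S.Fi P t x (max r t) with hG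
  have hIic : ∀ u v : ℝ, u ≤ S.b → v ≤ S.b → Set.uIcc u v ⊆ Set.Iic S.b := by
    intro u v hu hv y hy
    exact le_trans hy.2 (sup_le hu hv)
  have hGcont : ∀ t ∈ Set.Icc S.a S.b, ContinuousOn (G t) (Set.Iic S.b) := by
    intro t ht
    have hmaps : Set.MapsTo (fun r => max r t) (Set.Iic S.b) (Set.Icc t S.b) :=
      fun r hrr => ⟨le_max_right _ _, max_le hrr ht.2⟩
    exact (S.cont_r hP ht x).comp ((continuous_id.max continuous_const).continuousOn) hmaps
  have hGbdd : ∀ t ∈ Set.Icc S.a S.b, ∀ r : ℝ, r ≤ S.b → ‖G t r‖ ≤ S.c₀ * ‖x‖ := by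
    intro t ht r hrr
    exact S.bound_r hP ht x ⟨le_max_right _ _, max_le hrr ht.2⟩
  have hGint : ∀ t ∈ Set.Icc S.a S.b, ∀ u v : ℝ, u ≤ S.b → v ≤ S.b →
      IntervalIntegrable (G t) MeasureTheory.volume u v := by
    intro t ht u v hu hv
    exact ContinuousOn.intervalIntegrable ((hGcont t ht).mono (hIic u v hu hv))
  -- rewriting J through G
  have g3 : ∀ t ∈ Set.Icc S.a S.b, S.J P t x = ∫ r in t..S.b, G t r := by
    intro t ht
    unfold J
    apply intervalIntegral.integral_congr
    intro r hr
    rw [Set.uIcc_of_le ht.2] at hr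
    simp [hG, sup_eq_left.mpr hr.1]
  have g4 : ∀ t ∈ Set.Icc S.a S.b,
      S.J P t x = (∫ r in t..t₀, G t r) + ∫ r in t₀..S.b, G t r := by
    intro t ht
    rw [g3 t ht]
    exact (intervalIntegral.integral_add_adjacent_intervals
      (hGint t ht t t₀ ht.2 ht₀.2) (hGint t ht t₀ S.b ht₀.2 le_rfl)).symm
  -- first piece tends to zero
  have l1 : Tendsto (fun t => ∫ r in t..t₀, G t r) (𝓝[Set.Icc S.a S.b] t₀) (𝓝 0) := by
    apply squeeze_zero_norm' (a := fun t => (S.c₀ * ‖x‖) * |t₀ - t|)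
    · filter_upwards [self_mem_nhdsWithin] with t ht
      apply intervalIntegral.norm_integral_le_of_norm_le_const
      intro r hr
      exact hGbdd t ht r (le_trans hr.2 (sup_le ht.2 ht₀.2))
    · have hc : Continuous (fun t : ℝ => (S.c₀ * ‖x‖) * |t₀ - t|) := by continuity
      have := (hc.tendsto t₀).mono_left (nhdsWithin_le_nhds (s := Set.Icc S.a S.b))
      simpa using this
  -- second piece: dominated convergence
  have l2 : Tendsto (fun t => ∫ r in t₀..S.b, G t r) (𝓝[Set.Icc S.a S.b] t₀)
      (𝓝 (∫ r in t₀..S.b, G t₀ r)) := by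
    apply intervalIntegral.tendsto_integral_filter_of_dominated_convergence
      (bound := fun _ => S.c₀ * ‖x‖)
    · filter_upwards [self_mem_nhdsWithin] with t ht
      apply ContinuousOn.aestronglyMeasurable _ measurableSet_uIoc
      exact (hGcont t ht).mono (fun y hy => le_trans hy.2 (sup_le ht₀.2 le_rfl))
    · filter_upwards [self_mem_nhdsWithin] with t ht
      apply Filter.Eventually.of_forall
      intro r hr
      exact hGbdd t ht r (le_trans hr.2 (sup_le ht₀.2 le_rfl))
    · exact intervalIntegrable_const
    · apply Filter.Eventually.of_forall
      intro r hr
      rw [Set.uIoc_of_le ht₀.2] at hr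
      obtain ⟨hr1, hr2⟩ := hr
      have hra : r ∈ Set.Icc S.a S.b := ⟨le_trans ht₀.1 (le_of_lt hr1), hr2⟩
      have htendsto : Tendsto (fun t => S.Fi P t x r) (𝓝[Set.Icc S.a r] t₀)
          (𝓝 (S.Fi P t₀ x r)) := S.Fi_cont_t hP x hra t₀ ⟨ht₀.1, le_of_lt hr1⟩
      have hIio : Set.Iio r ∈ 𝓝[Set.Icc S.a S.b] t₀ :=
        mem_nhdsWithin_of_mem_nhds (Iio_mem_nhds hr1)
      have heq : 𝓝[Set.Iio r ∩ Set.Icc S.a S.b] t₀ = 𝓝[Set.Icc S.a S.b] t₀ :=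
        nhdsWithin_inter_of_mem hIio
      have hmono : 𝓝[Set.Iio r ∩ Set.Icc S.a S.b] t₀ ≤ 𝓝[Set.Icc S.a r] t₀ :=
        nhdsWithin_mono _ (fun y hy => ⟨hy.2.1, le_of_lt hy.1⟩)
      have h2 : Tendsto (fun t => S.Fi P t x r) (𝓝[Set.Icc S.a S.b] t₀)
          (𝓝 (S.Fi P t₀ x r)) := by
        rw [← heq]; exact htendsto.mono_left hmono
      have hev : (fun t => S.Fi P t x r) =ᶠ[𝓝[Set.Icc S.a S.b] t₀] (fun t => G t r) := by
        filter_upwards [hIio] with t ht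
        simp [hG, sup_eq_left.mpr (Set.mem_Iio.mp ht).le]
      have hval : G t₀ r = S.Fi P t₀ x r := by simp [hG, sup_eq_left.mpr hr1.le]
      rw [hval]
      exact h2.congr' hev
  -- combine
  have hsum := l1.add l2
  rw [zero_add] at hsum
  have hfinal : Tendsto (fun t => S.J P t x) (𝓝[Set.Icc S.a S.b] t₀)
      (𝓝 (∫ r in t₀..S.b, G t₀ r)) := by
    apply hsum.congr'
    filter_upwards [self_mem_nhdsWithin] with t ht
    exact (g4 t ht).symm
  have : S.J P t₀ x = ∫ r in t₀..S.b, G t₀ r := g3 t₀ ht₀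
  show Filter.Tendsto (fun t => S.J P t x) (𝓝[Set.Icc S.a S.b] t₀) (𝓝 (S.J P t₀ x))
  rw [this]
  exact hfinal

lemma Tnext_good {P : ℝ → X₁ →L[ℝ] X₂} (hP : S.Good P) : S.Good (S.Tnext hP) := by
  constructor
  · intro x
    have h1 : ContinuousOn (fun t => S.Q0 t x - S.J P t x) (Set.Icc S.a S.b) :=
      (S.hQ0sc x).sub (S.J_cont hP x)
    exact h1.congr (fun t ht => by rw [S.Tnext_apply hP ht])
  · intro t ht
    exact S.Tnext_norm_le hP ht

end RicSetup
namespace RicSetup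

set_option linter.unusedSectionVars false

open Filter Topology

variable {X₁ X₂ : Type*}
    [NormedAddCommGroup X₁] [NormedSpace ℝ X₁]
    [NormedAddCommGroup X₂] [NormedSpace ℝ X₂] [CompleteSpace X₂]
    (S : RicSetup X₁ X₂)

lemma good_Q0 : S.Good S.Q0 := by
  refine ⟨S.hQ0sc, fun t ht => le_trans (S.hnQ0 t ht) ?_⟩
  have h0 : 0 ≤ S.ρ ^ 2 * (S.b - S.a) * S.M₁ * S.M₂ * S.nB := by
    have := S.rho_nonneg; have := S.M1_nonneg; have := S.M2_nonneg; have := S.nB_nonneg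
    have := sub_nonneg.mpr S.hab
    positivity
  linarith [S.hρ₁]

/-- uniqueness within the ball -/
lemma unique_sol {P P' : ℝ → X₁ →L[ℝ] X₂} (hP : S.Good P) (hP' : S.Good P')
    (heq : ∀ t ∈ Set.Icc S.a S.b, ∀ x : X₁, P t x = S.Q0 t x - S.J P t x)
    (heq' : ∀ t ∈ Set.Icc S.a S.b, ∀ x : X₁, P' t x = S.Q0 t x - S.J P' t x) :
    ∀ t ∈ Set.Icc S.a S.b, P' t = P t := by
  set D : Set ℝ := {d : ℝ | ∃ t ∈ Set.Icc S.a S.b, d = ‖P' t - P t‖} with hD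
  have hne : (‖P' S.a - P S.a‖) ∈ D := ⟨S.a, ⟨le_rfl, S.hab⟩, rfl⟩
  have hbdd : BddAbove D := by
    refine ⟨2 * S.ρ, fun d hd => ?_⟩
    obtain ⟨t, ht, rfl⟩ := hd
    calc ‖P' t - P t‖ ≤ ‖P' t‖ + ‖P t‖ := norm_sub_le _ _
      _ ≤ 2 * S.ρ := by linarith [hP'.2 t ht, hP.2 t ht]
  set δ := sSup D with hδdef
  have hδ : ∀ s ∈ Set.Icc S.a S.b, ‖P' s - P s‖ ≤ δ :=
    fun s hs => le_csSup hbdd ⟨s, hs, rfl⟩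
  have hδ0 : 0 ≤ δ := le_trans (norm_nonneg _) (hδ S.a ⟨le_rfl, S.hab⟩)
  have hδ' : ∀ s ∈ Set.Icc S.a S.b, ‖P s - P' s‖ ≤ δ := by
    intro s hs; rw [norm_sub_rev]; exact hδ s hs
  have key : ∀ t ∈ Set.Icc S.a S.b, ‖P' t - P t‖ ≤ S.k * δ := by
    intro t ht
    apply ContinuousLinearMap.opNorm_le_bound _ (mul_nonneg S.k_nonneg hδ0)
    intro x
    have : (P' t - P t) x = S.J P t x - S.J P' t x := by
      rw [ContinuousLinearMap.sub_apply, heq t ht x, heq' t ht x]; abel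
    rw [this, norm_sub_rev]
    exact S.J_diff_bound hP' hP hδ ht x
  have hsup : δ ≤ S.k * δ :=
    Real.sSup_le (fun d hd => by obtain ⟨t, ht, rfl⟩ := hd; exact key t ht)
      (mul_nonneg S.k_nonneg hδ0)
  have hδzero : δ ≤ 0 := by nlinarith [S.k_lt_one]
  intro t ht
  have : ‖P' t - P t‖ ≤ 0 := le_trans (hδ t ht) hδzero
  have := norm_le_zero_iff.mp this
  exact sub_eq_zero.mp this

/-- The main existence and uniqueness result, abstract form. -/
lemma exists_unique_sol : ∃ P : ℝ → X₁ →L[ℝ] X₂, S.Good P ∧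
    (∀ t ∈ Set.Icc S.a S.b, ∀ x : X₁, P t x = S.Q0 t x - S.J P t x) ∧
    (∀ P' : ℝ → X₁ →L[ℝ] X₂, S.Good P' →
      (∀ t ∈ Set.Icc S.a S.b, ∀ x : X₁, P' t x = S.Q0 t x - S.J P' t x) →
      ∀ t ∈ Set.Icc S.a S.b, P' t = P t) := by
  classical
  -- Picard iterates
  let Tn : {P : ℝ → X₁ →L[ℝ] X₂ // S.Good P} → {P : ℝ → X₁ →L[ℝ] X₂ // S.Good P} :=
    fun P => ⟨S.Tnext P.2, S.Tnext_good P.2⟩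
  let seq : ℕ → {P : ℝ → X₁ →L[ℝ] X₂ // S.Good P} := fun n => Tn^[n] ⟨S.Q0, S.good_Q0⟩
  have seq_succ : ∀ n, seq (n + 1) = Tn (seq n) := fun n =>
    Function.iterate_succ_apply' Tn n _
  -- geometric step bound
  have dstep : ∀ n, ∀ t ∈ Set.Icc S.a S.b,
      ‖(seq (n+1)).1 t - (seq n).1 t‖ ≤ (2 * S.ρ) * S.k ^ n := by
    intro n
    induction n with
    | zero =>
      intro t ht
      simp only [pow_zero, mul_one]
      calc ‖(seq 1).1 t - (seq 0).1 t‖ ≤ ‖(seq 1).1 t‖ + ‖(seq 0).1 t‖ := norm_sub_le _ _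
        _ ≤ 2 * S.ρ := by linarith [(seq 1).2.2 t ht, (seq 0).2.2 t ht]
    | succ n ih =>
      intro t ht
      have h1 : (seq (n+2)).1 = S.Tnext (seq (n+1)).2 := by rw [seq_succ (n+1)]
      have h2 : (seq (n+1)).1 = S.Tnext (seq n).2 := by rw [seq_succ n]
      have e1 : (seq (n+2)).1 t = S.Tnext (seq (n+1)).2 t := congrFun h1 t
      have e2 : (seq (n+1)).1 t = S.Tnext (seq n).2 t := congrFun h2 t
      rw [e1, e2]
      calc ‖S.Tnext (seq (n+1)).2 t - S.Tnext (seq n).2 t‖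
          ≤ S.k * ((2 * S.ρ) * S.k ^ n) := S.Tnext_contraction _ _ ih ht
        _ = (2 * S.ρ) * S.k ^ (n+1) := by ring
  -- Cauchy and limit
  have hcauchy : ∀ t ∈ Set.Icc S.a S.b, CauchySeq (fun n => (seq n).1 t) := by
    intro t ht
    apply cauchySeq_of_le_geometric S.k (2 * S.ρ) S.k_lt_one
    intro n
    rw [dist_eq_norm, norm_sub_rev]
    exact dstep n t ht
  have hex : ∀ t : ℝ, ∃ L : X₁ →L[ℝ] X₂,
      t ∈ Set.Icc S.a S.b → Tendsto (fun n => (seq n).1 t) atTop (𝓝 L) := by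
    intro t
    by_cases ht : t ∈ Set.Icc S.a S.b
    · obtain ⟨L, hL⟩ := cauchySeq_tendsto_of_complete (hcauchy t ht)
      exact ⟨L, fun _ => hL⟩
    · exact ⟨0, fun h => absurd h ht⟩
  choose P hPlim using hex
  -- uniform geometric tail bound
  have htail : ∀ n, ∀ t ∈ Set.Icc S.a S.b,
      ‖(seq n).1 t - P t‖ ≤ (2 * S.ρ) * S.k ^ n / (1 - S.k) := by
    intro n t ht
    have := dist_le_of_le_geometric_of_tendsto S.k (2 * S.ρ) S.k_lt_one
      (f := fun n => (seq n).1 t)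
      (fun m => by rw [dist_eq_norm, norm_sub_rev]; exact dstep m t ht)
      (hPlim t ht) n
    rwa [dist_eq_norm] at this
  have hk1 : 0 < 1 - S.k := by linarith [S.k_lt_one]
  have htail0 : Tendsto (fun n => (2 * S.ρ) * S.k ^ n / (1 - S.k)) atTop (𝓝 0) := by
    have h := tendsto_pow_atTop_nhds_zero_of_lt_one S.k_nonneg S.k_lt_one
    have := (h.const_mul (2 * S.ρ)).div_const (1 - S.k)
    simpa using this
  -- Good P
  have hPgood : S.Good P := by
    constructor
    · intro x
      have huc : TendstoUniformlyOn (fun n t => (seq n).1 t x) (fun t => P t x) atTop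
          (Set.Icc S.a S.b) := by
        rw [Metric.tendstoUniformlyOn_iff]
        intro ε hε
        have hx : Tendsto (fun n => ((2 * S.ρ) * S.k ^ n / (1 - S.k)) * ‖x‖) atTop (𝓝 0) := by
          simpa using htail0.mul_const ‖x‖
        filter_upwards [hx.eventually (eventually_lt_nhds hε)] with n hn t ht
        calc dist (P t x) ((seq n).1 t x) = ‖(P t - (seq n).1 t) x‖ := by
              rw [dist_eq_norm]; simp [ContinuousLinearMap.sub_apply]
          _ ≤ ‖P t - (seq n).1 t‖ * ‖x‖ := (P t - (seq n).1 t).le_opNorm x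
          _ ≤ ((2 * S.ρ) * S.k ^ n / (1 - S.k)) * ‖x‖ := by
              apply mul_le_mul_of_nonneg_right _ (norm_nonneg x)
              rw [norm_sub_rev]; exact htail n t ht
          _ < ε := hn
      exact huc.continuousOn (Filter.Eventually.of_forall (fun n => (seq n).2.1 x)).frequently
    · intro t ht
      have hlim : Tendsto (fun n => ‖(seq n).1 t‖) atTop (𝓝 ‖P t‖) :=
        (hPlim t ht).norm
      exact le_of_tendsto hlim (Filter.Eventually.of_forall (fun n => (seq n).2.2 t ht))
  -- the fixed point equation
  have heqP : ∀ t ∈ Set.Icc S.a S.b, ∀ x : X₁, P t x = S.Q0 t x - S.J P t x := by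
    intro t ht x
    have hL1 : Tendsto (fun n => (seq (n+1)).1 t x) atTop (𝓝 (P t x)) := by
      have h1 : Tendsto (fun n => (seq n).1 t x) atTop (𝓝 (P t x)) :=
        ((ContinuousLinearMap.apply ℝ X₂ x).continuous.tendsto _).comp (hPlim t ht)
      exact h1.comp (Filter.tendsto_add_atTop_nat 1)
    have hJlim : Tendsto (fun n => S.J (seq n).1 t x) atTop (𝓝 (S.J P t x)) := by
      rw [tendsto_iff_norm_sub_tendsto_zero]
      apply squeeze_zero_norm'
        (a := fun n => S.k * ((2 * S.ρ) * S.k ^ n / (1 - S.k)) * ‖x‖)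
      · apply Filter.Eventually.of_forall
        intro n
        rw [norm_norm]
        exact S.J_diff_bound (seq n).2 hPgood (fun s hs => htail n s hs) ht x
      · have := (htail0.const_mul S.k).mul_const ‖x‖
        simpa [mul_assoc] using this
    have hL2 : Tendsto (fun n => (seq (n+1)).1 t x) atTop (𝓝 (S.Q0 t x - S.J P t x)) := by
      have heq : ∀ n, (seq (n+1)).1 t x = S.Q0 t x - S.J (seq n).1 t x := by
        intro n
        have h1 : (seq (n+1)).1 = S.Tnext (seq n).2 := by rw [seq_succ n]
        rw [h1, S.Tnext_apply (seq n).2 ht]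
      have := (tendsto_const_nhds (x := S.Q0 t x) (f := atTop (α := ℕ))).sub hJlim
      exact this.congr (fun n => (heq n).symm)
    exact tendsto_nhds_unique hL1 hL2
  exact ⟨P, hPgood, heqP, fun P' hP' heq' => S.unique_sol hPgood hP' heqP heq'⟩

end RicSetup
/-- under the contraction conditions, the quadratic integral equation
`P(t) = Q₀(t) − ∫_t^b Q⁽²⁾_{r,t}P(r)B(r)P(r)Q⁽¹⁾_{r,t}dr` has a unique strongly
continuous solution with `‖P‖ᵤ ≤ ρ`. -/
theorem riccati_quadratic_equation_unique_solution_in_ball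
    {X₁ X₂ : Type*}
    [NormedAddCommGroup X₁] [NormedSpace ℝ X₁] [CompleteSpace X₁]
    [NormedAddCommGroup X₂] [NormedSpace ℝ X₂] [CompleteSpace X₂]
    (a b : ℝ) (hab : a ≤ b)
    -- uniformly bounded families Q⁽¹⁾, Q⁽²⁾, strongly continuous in each variable
    (Q1 : ℝ → ℝ → X₁ →L[ℝ] X₁) (Q2 : ℝ → ℝ → X₂ →L[ℝ] X₂)
    (M₁ M₂ : ℝ)
    (hQ1bdd : ∀ t s : ℝ, a ≤ t → t ≤ s → s ≤ b → ‖Q1 s t‖ ≤ M₁)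
    (hQ2bdd : ∀ t s : ℝ, a ≤ t → t ≤ s → s ≤ b → ‖Q2 s t‖ ≤ M₂)
    (hQ1sc₁ : ∀ x : X₁, ∀ t ∈ Set.Icc a b, ContinuousOn (fun s => Q1 s t x) (Set.Icc t b))
    (hQ1sc₂ : ∀ x : X₁, ∀ s ∈ Set.Icc a b, ContinuousOn (fun t => Q1 s t x) (Set.Icc a s))
    (hQ2sc₁ : ∀ y : X₂, ∀ t ∈ Set.Icc a b, ContinuousOn (fun s => Q2 s t y) (Set.Icc t b))
    (hQ2sc₂ : ∀ y : X₂, ∀ s ∈ Set.Icc a b, ContinuousOn (fun t => Q2 s t y) (Set.Icc a s))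
    -- coefficient B with sup-norm bound
    (B : ℝ → X₂ →L[ℝ] X₁)
    (hBsc : ∀ y : X₂, ContinuousOn (fun t => B t y) (Set.Icc a b))
    (nB : ℝ) (hnB : ∀ t ∈ Set.Icc a b, ‖B t‖ ≤ nB)
    -- free term Q₀ with sup-norm bound
    (Q0 : ℝ → X₁ →L[ℝ] X₂)
    (hQ0sc : ∀ x : X₁, ContinuousOn (fun t => Q0 t x) (Set.Icc a b))
    (nQ0 : ℝ) (hnQ0 : ∀ t ∈ Set.Icc a b, ‖Q0 t‖ ≤ nQ0)
    -- the number ρ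
    (ρ : ℝ) (hρ₁ : nQ0 + ρ ^ 2 * (b - a) * M₁ * M₂ * nB ≤ ρ)
    (hρ₂ : 2 * ρ * (b - a) * M₁ * M₂ * nB < 1) :
    -- unique solution in the ball B_ρ
    ∃ P : ℝ → X₁ →L[ℝ] X₂,
      (∀ x : X₁, ContinuousOn (fun t => P t x) (Set.Icc a b)) ∧
      (∀ t ∈ Set.Icc a b, ‖P t‖ ≤ ρ) ∧
      (∀ t ∈ Set.Icc a b, ∀ x : X₁,
        P t x = Q0 t x - ∫ r in t..b, Q2 r t (P r (B r (P r (Q1 r t x))))) ∧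
      (∀ P' : ℝ → X₁ →L[ℝ] X₂,
        (∀ x : X₁, ContinuousOn (fun t => P' t x) (Set.Icc a b)) →
        (∀ t ∈ Set.Icc a b, ‖P' t‖ ≤ ρ) →
        (∀ t ∈ Set.Icc a b, ∀ x : X₁,
          P' t x = Q0 t x - ∫ r in t..b, Q2 r t (P' r (B r (P' r (Q1 r t x))))) →
        ∀ t ∈ Set.Icc a b, P' t = P t) := by
  set S : RicSetup X₁ X₂ :=
    { a := a, b := b, hab := hab, Q1 := Q1, Q2 := Q2, M₁ := M₁, M₂ := M₂,
      hQ1bdd := hQ1bdd, hQ2bdd := hQ2bdd, hQ1sc₁ := hQ1sc₁, hQ1sc₂ := hQ1sc₂,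
      hQ2sc₁ := hQ2sc₁, hQ2sc₂ := hQ2sc₂, B := B, hBsc := hBsc, nB := nB, hnB := hnB,
      Q0 := Q0, hQ0sc := hQ0sc, nQ0 := nQ0, hnQ0 := hnQ0, ρ := ρ, hρ₁ := hρ₁,
      hρ₂ := hρ₂ } with hS
  obtain ⟨P, hPgood, hPeq, hPuniq⟩ := S.exists_unique_sol
  refine ⟨P, hPgood.1, hPgood.2, ?_, ?_⟩
  · intro t ht x
    exact hPeq t ht x
  · intro P' hc hb' he t ht
    refine hPuniq P' ⟨hc, hb'⟩ ?_ t ht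
    intro s hs x
    exact he s hs x
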